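/- If a set system S on a set X has finite VC dimension d, then for every n, the shatter function satisfies π_S(n) ≤ C(n,0) + C(n,1) + ... + C(n,d). -/

import Mathlib

/-- A finite set `A` is shattered by the set system `S` if every subset of `A`
is cut out by some member of `S`. -/
def Shattered {X : Type*} (S : Set (Set X)) (A : Finset X) : Prop :=
  ∀ B ⊆ A, ∃ s ∈ S, (A : Set X) ∩ s = (B : Set X)

/-- Sauer–Shelah: if `S` has finite VC dimension `d`, then for every `n` the shatter
function satisfies `π_S(n) ≤ C(n,0) + ⋯ + C(n,d)`. -/
theorem stmt0 {X : Type*} (S : Set (Set X)) (d : ℕ)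
    (hex : ∃ A : Finset X, A.card = d ∧ Shattered S A)
    (hbd : ∀ A : Finset X, Shattered S A → A.card ≤ d) :
    ∀ (n : ℕ) (A : Finset X), A.card = n →
      Set.ncard {B : Finset X | B ⊆ A ∧ ∃ s ∈ S, (A : Set X) ∩ s = (B : Set X)} ≤
        ∑ i ∈ Finset.range (d + 1), n.choose i := by
  classical
  intro n A hA
  set 𝒜 : Finset (Finset X) :=
    A.powerset.filter (fun B => ∃ s ∈ S, (A : Set X) ∩ s = (B : Set X)) with h𝒜
  have hset : {B : Finset X | B ⊆ A ∧ ∃ s ∈ S, (A : Set X) ∩ s = (B : Set X)} = ↑𝒜 := by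
    ext B
    simp [h𝒜, Finset.mem_powerset]
  rw [hset, Set.ncard_coe_finset]
  -- every member of 𝒜 is a subset of A
  have hmemA : ∀ B ∈ 𝒜, B ⊆ A := fun B hB => Finset.mem_powerset.1 (Finset.mem_filter.1 hB).1
  -- any finset shattered by 𝒜 is Shattered by S, hence has card ≤ d
  have hshat : ∀ s : Finset X, 𝒜.Shatters s → s.card ≤ d := by
    intro s hs
    have hsA : s ⊆ A := by
      obtain ⟨u, hu, hsu⟩ := hs.exists_superset
      exact hsu.trans (hmemA u hu)
    refine hbd s (fun B hB => ?_)
    obtain ⟨u, hu, hsu⟩ := hs hB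
    obtain ⟨t, htS, htu⟩ := (Finset.mem_filter.1 hu).2
    refine ⟨t, htS, ?_⟩
    have : (s : Set X) ∩ t = (s : Set X) ∩ ((A : Set X) ∩ t) := by
      rw [← Set.inter_assoc, Set.inter_eq_left.2 (Finset.coe_subset.2 hsA)]
    rw [this, htu, ← Finset.coe_inter, hsu]
  -- the shatterer of 𝒜 is contained in small subsets of A
  have hsub : 𝒜.shatterer ⊆ (Finset.range (d + 1)).biUnion (fun i => A.powersetCard i) := by
    intro s hs
    have hs' := Finset.mem_shatterer.1 hs
    have hsA : s ⊆ A := by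
      obtain ⟨u, hu, hsu⟩ := hs'.exists_superset
      exact hsu.trans (hmemA u hu)
    exact Finset.mem_biUnion.2 ⟨s.card, Finset.mem_range.2 (Nat.lt_succ_of_le (hshat s hs')),
      (Finset.mem_powersetCard).2 ⟨hsA, rfl⟩⟩
  calc 𝒜.card ≤ 𝒜.shatterer.card := Finset.card_le_card_shatterer 𝒜
    _ ≤ ((Finset.range (d + 1)).biUnion (fun i => A.powersetCard i)).card :=
        Finset.card_le_card hsub
    _ ≤ ∑ i ∈ Finset.range (d + 1), (A.powersetCard i).card := Finset.card_biUnion_le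
    _ = ∑ i ∈ Finset.range (d + 1), n.choose i := by
        simp [Finset.card_powersetCard, hA]
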